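/- Let s with 1 ≤ s ≤ p−1, a = ±1. The 2p-dimensional module P^a_s with basis {a_n, b_n : 0 ≤ n ≤ s−1} ∪ {x_k, y_k : 0 ≤ k ≤ p−s−1} and the action given in the paper (K acts diagonally with K b_n = a q^{s−1−2n} b_n etc.; E b_n = a[n][s−n]b_{n−1} + a_{n−1} for 1 ≤ n ≤ s−1, E b_0 = x_{p−s−1}, E y_0 = a_{s−1}, F b_{s−1} = y_0, F x_{p−s−1} = a_0, and the remaining actions standard) is a well-defined U_q(sl2)-module: the operators satisfy all defining relations of U_q(sl2). -/

import Mathlib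

noncomputable section

/-- `q = e^{iπ/p}`. -/
def qc (p : ℕ) : ℂ := Complex.exp (Complex.I * Real.pi / p)

/-- The q-integer `[n] = (q^n - q^{-n})/(q - q^{-1})`. -/
def qint (p n : ℕ) : ℂ := (qc p ^ n - (qc p)⁻¹ ^ n) / (qc p - (qc p)⁻¹)

/-- Basis index of the projective module `P^a_s`:
`inl (inl n) ↦ a_n`, `inl (inr n) ↦ b_n` (`0 ≤ n ≤ s-1`),
`inr (inl k) ↦ x_k`, `inr (inr k) ↦ y_k` (`0 ≤ k ≤ p-s-1`). -/
abbrev PIdx (p s : ℕ) : Type := (Fin s ⊕ Fin s) ⊕ (Fin (p - s) ⊕ Fin (p - s))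

/-- Action of `K` on `P^a_s`: `K a_n = a q^{s-1-2n} a_n`, `K b_n = a q^{s-1-2n} b_n`,
`K x_k = -a q^{p-s-1-2k} x_k`, `K y_k = -a q^{p-s-1-2k} y_k`. -/
def PK (p s : ℕ) (a : ℂ) : Matrix (PIdx p s) (PIdx p s) ℂ :=
  Matrix.diagonal fun i =>
    match i with
    | Sum.inl (Sum.inl n) => a * qc p ^ ((s : ℤ) - 1 - 2 * (n : ℤ))
    | Sum.inl (Sum.inr n) => a * qc p ^ ((s : ℤ) - 1 - 2 * (n : ℤ))
    | Sum.inr (Sum.inl k) => -a * qc p ^ (((p - s : ℕ) : ℤ) - 1 - 2 * (k : ℤ))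
    | Sum.inr (Sum.inr k) => -a * qc p ^ (((p - s : ℕ) : ℤ) - 1 - 2 * (k : ℤ))

/-- The inverse of the action of `K` on `P^a_s`. -/
def PKinv (p s : ℕ) (a : ℂ) : Matrix (PIdx p s) (PIdx p s) ℂ :=
  Matrix.diagonal fun i =>
    match i with
    | Sum.inl (Sum.inl n) => (a * qc p ^ ((s : ℤ) - 1 - 2 * (n : ℤ)))⁻¹
    | Sum.inl (Sum.inr n) => (a * qc p ^ ((s : ℤ) - 1 - 2 * (n : ℤ)))⁻¹
    | Sum.inr (Sum.inl k) => (-a * qc p ^ (((p - s : ℕ) : ℤ) - 1 - 2 * (k : ℤ)))⁻¹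
    | Sum.inr (Sum.inr k) => (-a * qc p ^ (((p - s : ℕ) : ℤ) - 1 - 2 * (k : ℤ)))⁻¹

/-- Action of `E` on `P^a_s`: `E a_n = a[n][s-n]a_{n-1}` (`a_{-1} = 0`);
`E b_n = a[n][s-n]b_{n-1} + a_{n-1}` for `n ≥ 1`, `E b_0 = x_{p-s-1}`;
`E x_k = -a[k][p-s-k]x_{k-1}` (`x_{-1} = 0`);
`E y_k = -a[k][p-s-k]y_{k-1}` for `k ≥ 1`, `E y_0 = a_{s-1}`. -/
def PE (p s : ℕ) (a : ℂ) : Matrix (PIdx p s) (PIdx p s) ℂ :=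
  Matrix.of fun i j =>
    match i, j with
    | Sum.inl (Sum.inl m), Sum.inl (Sum.inl n) =>
        if (m : ℕ) + 1 = (n : ℕ) then a * qint p n * qint p (s - (n : ℕ)) else 0
    | Sum.inl (Sum.inr m), Sum.inl (Sum.inr n) =>
        if (m : ℕ) + 1 = (n : ℕ) then a * qint p n * qint p (s - (n : ℕ)) else 0
    | Sum.inl (Sum.inl m), Sum.inl (Sum.inr n) =>
        if (m : ℕ) + 1 = (n : ℕ) then 1 else 0
    | Sum.inr (Sum.inl k), Sum.inl (Sum.inr n) =>
        if (n : ℕ) = 0 ∧ (k : ℕ) = p - s - 1 then 1 else 0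
    | Sum.inr (Sum.inl m), Sum.inr (Sum.inl k) =>
        if (m : ℕ) + 1 = (k : ℕ) then -a * qint p k * qint p (p - s - (k : ℕ)) else 0
    | Sum.inr (Sum.inr m), Sum.inr (Sum.inr k) =>
        if (m : ℕ) + 1 = (k : ℕ) then -a * qint p k * qint p (p - s - (k : ℕ)) else 0
    | Sum.inl (Sum.inl m), Sum.inr (Sum.inr k) =>
        if (k : ℕ) = 0 ∧ (m : ℕ) = s - 1 then 1 else 0
    | _, _ => 0

/-- Action of `F` on `P^a_s`: `F a_n = a_{n+1}` (`a_s = 0`);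
`F b_n = b_{n+1}` for `n ≤ s-2`, `F b_{s-1} = y_0`;
`F x_k = x_{k+1}` for `k ≤ p-s-2`, `F x_{p-s-1} = a_0`;
`F y_k = y_{k+1}` (`y_{p-s} = 0`). -/
def PF (p s : ℕ) : Matrix (PIdx p s) (PIdx p s) ℂ :=
  Matrix.of fun i j =>
    match i, j with
    | Sum.inl (Sum.inl m), Sum.inl (Sum.inl n) =>
        if (m : ℕ) = (n : ℕ) + 1 then 1 else 0
    | Sum.inl (Sum.inr m), Sum.inl (Sum.inr n) =>
        if (m : ℕ) = (n : ℕ) + 1 then 1 else 0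
    | Sum.inr (Sum.inr k), Sum.inl (Sum.inr n) =>
        if (n : ℕ) = s - 1 ∧ (k : ℕ) = 0 then 1 else 0
    | Sum.inr (Sum.inl m), Sum.inr (Sum.inl k) =>
        if (m : ℕ) = (k : ℕ) + 1 then 1 else 0
    | Sum.inl (Sum.inl m), Sum.inr (Sum.inl k) =>
        if (k : ℕ) = p - s - 1 ∧ (m : ℕ) = 0 then 1 else 0
    | Sum.inr (Sum.inr m), Sum.inr (Sum.inr k) =>
        if (m : ℕ) = (k : ℕ) + 1 then 1 else 0
    | _, _ => 0

lemma qc_ne_zero (p : ℕ) : qc p ≠ 0 := Complex.exp_ne_zero _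

lemma qc_pow_p (p : ℕ) (hp : 2 ≤ p) : qc p ^ p = -1 := by
  have hp0 : (p:ℂ) ≠ 0 := Nat.cast_ne_zero.mpr (by omega)
  rw [qc, ← Complex.exp_nat_mul]
  have : (p:ℂ) * (Complex.I * Real.pi / p) = Complex.I * Real.pi := by
    field_simp
  rw [this, mul_comm, Complex.exp_pi_mul_I]

lemma qc_pow_2p (p : ℕ) (hp : 2 ≤ p) : qc p ^ (2 * p) = 1 := by
  rw [mul_comm, pow_mul, qc_pow_p p hp]; norm_num

lemma qc_sq_ne_one (p : ℕ) (hp : 2 ≤ p) : qc p ^ 2 ≠ 1 := by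
  rw [qc, ← Complex.exp_nat_mul]
  intro h
  rw [Complex.exp_eq_one_iff] at h
  obtain ⟨n, hn⟩ := h
  have hpi : (Real.pi : ℂ) ≠ 0 := by
    exact_mod_cast Real.pi_ne_zero
  have hp0 : (p:ℂ) ≠ 0 := Nat.cast_ne_zero.mpr (by omega)
  have hI : (Complex.I : ℂ) ≠ 0 := Complex.I_ne_zero
  have h2 : ((n * p : ℤ) : ℂ) = ((1:ℤ):ℂ) := by
    push_cast
    field_simp at hn
    have h3 : (n:ℂ) * p * (2 * Real.pi * Complex.I) = 1 * (2 * Real.pi * Complex.I) := by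
      linear_combination (-((Real.pi : ℂ) * Complex.I)) * hn
    exact mul_right_cancel₀ (by simp [hpi, hI]) h3
  have hp1 : (n : ℤ) * p = 1 := Int.cast_injective h2
  have : (p:ℤ) ≤ 1 := Int.le_of_dvd one_pos ⟨n, by linarith⟩
  omega

lemma qc_sub_inv_ne_zero (p : ℕ) (hp : 2 ≤ p) : qc p - (qc p)⁻¹ ≠ 0 := by
  intro h
  apply qc_sq_ne_one p hp
  have h0 := qc_ne_zero p
  field_simp at h
  rw [sq]; linear_combination h

def Jz (p : ℕ) (z : ℤ) : ℂ := (qc p ^ z - qc p ^ (-z)) / (qc p - (qc p)⁻¹)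

lemma qint_eq_Jz (p n : ℕ) : qint p n = Jz p n := by
  rw [qint, Jz, zpow_neg, zpow_natCast, inv_pow]

lemma Jz_zero (p : ℕ) : Jz p 0 = 0 := by simp [Jz]

lemma Jz_neg (p : ℕ) (z : ℤ) : Jz p (-z) = - Jz p z := by
  rw [Jz, Jz, neg_neg]; ring

lemma Jz_key (p : ℕ) (hp : 2 ≤ p) (x y : ℤ) :
    Jz p x * Jz p y - Jz p (x - 1) * Jz p (y + 1) = Jz p (y - x + 1) := by
  have hq0 := qc_ne_zero p
  have hd := qc_sub_inv_ne_zero p hp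
  have hA : qc p ^ x ≠ 0 := zpow_ne_zero _ hq0
  have hB : qc p ^ y ≠ 0 := zpow_ne_zero _ hq0
  simp only [Jz, zpow_neg, zpow_add₀ hq0, zpow_sub₀ hq0, zpow_one]
  generalize qc p ^ x = A at hA ⊢
  generalize qc p ^ y = B at hB ⊢
  have main : (A - A⁻¹) * (B - B⁻¹) - (A/qc p - (A/qc p)⁻¹)*(B*qc p - (B*qc p)⁻¹)
      = (B*qc p/A - (B*qc p/A)⁻¹)*(qc p - (qc p)⁻¹) := by
    field_simp
    ring
  rw [div_mul_div_comm, div_mul_div_comm, div_sub_div_same, main,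
    mul_div_mul_right _ _ hd, div_mul_eq_mul_div]

lemma qint_zero (p : ℕ) : qint p 0 = 0 := by simp [qint]

lemma fin_sum_pin {N : ℕ} (f : Fin N → ℂ) (k : ℕ) (g : ℂ)
    (h0 : ∀ i : Fin N, (i : ℕ) ≠ k → f i = 0)
    (h1 : ∀ i : Fin N, (i : ℕ) = k → f i = g)
    (h2 : N ≤ k → g = 0) :
    ∑ i, f i = g := by
  rcases Nat.lt_or_ge k N with h | h
  · rw [Finset.sum_eq_single (⟨k, h⟩ : Fin N)]
    · exact h1 _ rfl
    · intro b _ hb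
      exact h0 b (fun hbk => hb (Fin.ext hbk))
    · intro hk; exact absurd (Finset.mem_univ _) hk
  · have hz : ∑ i, f i = 0 :=
      Finset.sum_eq_zero fun i _ => h0 i (by have := i.isLt; omega)
    rw [hz, h2 h]

lemma sum_EF_diag (p N : ℕ) (c : ℂ) (M n : ℕ) :
    (∑ x : Fin N, (if M + 1 = (x : ℕ) then c * qint p x * qint p (N - x) else 0) *
      if (x : ℕ) = n + 1 then 1 else 0)
    = if M = n then c * qint p (n + 1) * qint p (N - (n + 1)) else 0 := by
  apply fin_sum_pin _ (n + 1)
  · intro i hi; rw [if_neg (show ¬((i:ℕ) = n + 1) by omega), mul_zero]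
  · intro i hi
    rw [if_pos hi, mul_one, hi]
    by_cases h : M = n
    · rw [if_pos (by omega), if_pos h]
    · rw [if_neg (by omega), if_neg h]
  · intro h
    rw [show N - (n + 1) = 0 by omega, qint_zero]
    split_ifs <;> ring

lemma sum_FE_diag (p N : ℕ) (c : ℂ) (M n : ℕ) :
    (∑ x : Fin N, (if M = (x : ℕ) + 1 then (1:ℂ) else 0) *
      if (x : ℕ) + 1 = n then c * qint p n * qint p (N - n) else 0)
    = if M = n then c * qint p n * qint p (N - n) else 0 := by
  by_cases hn : n = 0
  · subst hn
    have hz : ∀ x : Fin N,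
        (if M = (x : ℕ) + 1 then (1:ℂ) else 0) *
          (if (x : ℕ) + 1 = 0 then c * qint p 0 * qint p (N - 0) else 0) = 0 :=
      fun x => by rw [if_neg (show ¬((x:ℕ) + 1 = 0) by omega), mul_zero]
    rw [Finset.sum_eq_zero fun i _ => hz i, qint_zero]
    split_ifs <;> ring
  · apply fin_sum_pin _ (n - 1)
    · intro i hi; rw [if_neg (show ¬((i:ℕ) + 1 = n) by omega), mul_zero]
    · intro i hi
      rw [if_pos (show (i:ℕ) + 1 = n by omega)]
      by_cases h : M = n
      · rw [if_pos (show M = (i:ℕ) + 1 by omega), if_pos h, one_mul]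
      · rw [if_neg (show ¬(M = (i:ℕ) + 1) by omega), if_neg h, zero_mul]
    · intro h
      rw [show N - n = 0 by omega, qint_zero]
      split_ifs <;> ring

lemma sum_EF_ab (N M n : ℕ) :
    (∑ x : Fin N, (if M + 1 = (x : ℕ) then (1:ℂ) else 0) *
      if (x : ℕ) = n + 1 then 1 else 0)
    = if M = n ∧ n + 1 < N then 1 else 0 := by
  apply fin_sum_pin _ (n + 1)
  · intro i hi; rw [if_neg (show ¬((i:ℕ) = n + 1) by omega), mul_zero]
  · intro i hi
    have := i.isLt
    rw [if_pos hi, mul_one]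
    by_cases h : M = n
    · rw [if_pos (show M + 1 = (i:ℕ) by omega), if_pos ⟨h, by omega⟩]
    · rw [if_neg (show ¬(M + 1 = (i:ℕ)) by omega), if_neg (by omega)]
  · intro h; rw [if_neg (by omega)]

lemma sum_FE_ab (N M n : ℕ) :
    (∑ x : Fin N, (if M = (x : ℕ) + 1 then (1:ℂ) else 0) *
      if (x : ℕ) + 1 = n then 1 else 0)
    = if M = n ∧ 1 ≤ n ∧ n ≤ N then 1 else 0 := by
  by_cases hn : n = 0
  · subst hn
    have hz : ∀ x : Fin N,
        (if M = (x : ℕ) + 1 then (1:ℂ) else 0) * (if (x : ℕ) + 1 = 0 then (1:ℂ) else 0) = 0 :=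
      fun x => by rw [if_neg (show ¬((x:ℕ) + 1 = 0) by omega), mul_zero]
    rw [Finset.sum_eq_zero fun i _ => hz i, if_neg (by omega)]
  · apply fin_sum_pin _ (n - 1)
    · intro i hi; rw [if_neg (show ¬((i:ℕ) + 1 = n) by omega), mul_zero]
    · intro i hi
      have := i.isLt
      rw [if_pos (show (i:ℕ) + 1 = n by omega), mul_one]
      by_cases h : M = n
      · rw [if_pos (show M = (i:ℕ) + 1 by omega), if_pos ⟨h, by omega, by omega⟩]
      · rw [if_neg (show ¬(M = (i:ℕ) + 1) by omega), if_neg (by omega)]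
    · intro h; rw [if_neg (by omega)]

lemma sum_cross3 (N u A w B : ℕ) :
    (∑ x : Fin N, (if (x : ℕ) = 0 ∧ u = A then (1:ℂ) else 0) *
      if w = B ∧ (x : ℕ) = 0 then 1 else 0)
    = if u = A ∧ w = B ∧ 0 < N then 1 else 0 := by
  apply fin_sum_pin _ 0
  · intro i hi; rw [if_neg (show ¬((i:ℕ) = 0 ∧ u = A) by omega), zero_mul]
  · intro i hi
    have := i.isLt
    by_cases hu : u = A
    · by_cases hw : w = B
      · rw [if_pos ⟨hi, hu⟩, if_pos ⟨hw, hi⟩, if_pos ⟨hu, hw, by omega⟩]; norm_num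
      · rw [if_pos ⟨hi, hu⟩, if_neg (fun hc => hw hc.1), mul_zero,
          if_neg (fun hc => hw hc.2.1)]
    · rw [if_neg (fun hc => hu hc.2), zero_mul, if_neg (fun hc => hu hc.1)]
  · intro h; rw [if_neg (by omega)]

lemma sum_cross10 (N u v w z : ℕ) :
    (∑ x : Fin N, (if (x : ℕ) = N - 1 ∧ u = v then (1:ℂ) else 0) *
      if w = z ∧ (x : ℕ) = N - 1 then 1 else 0)
    = if u = v ∧ w = z ∧ 0 < N then 1 else 0 := by
  apply fin_sum_pin _ (N - 1)
  · intro i hi; rw [if_neg (show ¬((i:ℕ) = N - 1 ∧ u = v) by omega), zero_mul]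
  · intro i hi
    have := i.isLt
    by_cases hu : u = v
    · by_cases hw : w = z
      · rw [if_pos ⟨hi, hu⟩, if_pos ⟨hw, hi⟩, if_pos ⟨hu, hw, by omega⟩]; norm_num
      · rw [if_pos ⟨hi, hu⟩, if_neg (fun hc => hw hc.1), mul_zero,
          if_neg (fun hc => hw hc.2.1)]
    · rw [if_neg (fun hc => hu hc.2), zero_mul, if_neg (fun hc => hu hc.1)]
  · intro h; rw [if_neg (by omega)]

lemma sum_z4 (p N M u v : ℕ) (c : ℂ) :
    (∑ x : Fin N, (if M + 1 = (x : ℕ) then c * qint p x * qint p (N - x) else 0) *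
      if u = v ∧ (x : ℕ) = 0 then 1 else 0) = 0 := by
  apply Finset.sum_eq_zero
  intro i _
  by_cases hi : (i : ℕ) = 0
  · rw [if_neg (show ¬(M + 1 = (i:ℕ)) by omega), zero_mul]
  · rw [if_neg (show ¬(u = v ∧ (i:ℕ) = 0) by omega), mul_zero]

lemma sum_z5 (N u v n : ℕ) :
    (∑ x : Fin N, (if (x : ℕ) = 0 ∧ u = v then (1:ℂ) else 0) *
      if (x : ℕ) = n + 1 then 1 else 0) = 0 := by
  apply Finset.sum_eq_zero
  intro i _
  by_cases hi : (i : ℕ) = 0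
  · rw [if_neg (show ¬((i:ℕ) = n + 1) by omega), mul_zero]
  · rw [if_neg (show ¬((i:ℕ) = 0 ∧ u = v) by omega), zero_mul]

lemma sum_z11 (p N u v k : ℕ) (c : ℂ) :
    (∑ x : Fin N, (if (x : ℕ) = N - 1 ∧ u = v then (1:ℂ) else 0) *
      if (x : ℕ) + 1 = k then c * qint p k * qint p (N - k) else 0) = 0 := by
  apply Finset.sum_eq_zero
  intro i _
  by_cases h1 : (i : ℕ) = N - 1 ∧ u = v
  · by_cases h2 : (i : ℕ) + 1 = k
    · have := i.isLt
      rw [if_pos h2, show N - k = 0 by omega, qint_zero, mul_zero, mul_zero]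
    · rw [if_neg h2, mul_zero]
  · rw [if_neg h1, zero_mul]

lemma sum_z12 (N M u v : ℕ) :
    (∑ x : Fin N, (if M = (x : ℕ) + 1 then (1:ℂ) else 0) *
      if u = v ∧ (x : ℕ) = N - 1 then 1 else 0)
    = if u = v ∧ M = N ∧ 0 < N then 1 else 0 := by
  apply fin_sum_pin _ (N - 1)
  · intro i hi; rw [if_neg (show ¬(u = v ∧ (i:ℕ) = N - 1) by omega), mul_zero]
  · intro i hi
    have := i.isLt
    by_cases hu : u = v
    · by_cases hM : M = N
      · rw [if_pos (show M = (i:ℕ) + 1 by omega), if_pos ⟨hu, hi⟩,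
          if_pos ⟨hu, hM, by omega⟩]; norm_num
      · rw [if_neg (show ¬(M = (i:ℕ) + 1) by omega), zero_mul,
          if_neg (fun hc => hM hc.2.1)]
    · rw [if_neg (show ¬(u = v ∧ (i:ℕ) = N - 1) from fun hc => hu hc.1), mul_zero,
        if_neg (show ¬(u = v ∧ M = N ∧ 0 < N) from fun hc => hu hc.1)]
  · intro h; rw [if_neg (by omega)]

lemma inv_pm (a : ℂ) (ha : a = 1 ∨ a = -1) : a⁻¹ = a := by
  rcases ha with h | h <;> rw [h] <;> norm_num

lemma Kdiag_val (p : ℕ) (hp : 2 ≤ p) (c : ℂ) (hc : c = 1 ∨ c = -1) (z : ℤ) :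
    (qc p - (qc p)⁻¹)⁻¹ * (c * qc p ^ z - (c * qc p ^ z)⁻¹) = c * Jz p z := by
  have hq0 := qc_ne_zero p
  rw [mul_inv, inv_pm c hc, ← zpow_neg, Jz, div_eq_mul_inv]
  ring

lemma diag_id (p : ℕ) (hp : 2 ≤ p) (c : ℂ) (hc : c = 1 ∨ c = -1) (N n : ℕ) (hn : n < N) :
    c * qint p (n + 1) * qint p (N - (n + 1)) - c * qint p n * qint p (N - n)
      = (qc p - (qc p)⁻¹)⁻¹ *
        (c * qc p ^ ((N : ℤ) - 1 - 2 * (n : ℤ)) - (c * qc p ^ ((N : ℤ) - 1 - 2 * (n : ℤ)))⁻¹) := by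
  rw [Kdiag_val p hp c hc]
  rw [qint_eq_Jz, qint_eq_Jz, qint_eq_Jz, qint_eq_Jz]
  rw [show ((N - (n + 1) : ℕ) : ℤ) = (N : ℤ) - (n : ℤ) - 1 by omega,
      show ((N - n : ℕ) : ℤ) = (N : ℤ) - (n : ℤ) by omega,
      show ((n + 1 : ℕ) : ℤ) = (n : ℤ) + 1 by omega]
  have k := Jz_key p hp ((n : ℤ) + 1) ((N : ℤ) - (n : ℤ) - 1)
  rw [show ((n : ℤ) + 1 - 1) = (n : ℤ) by ring,
      show ((N : ℤ) - (n : ℤ) - 1 + 1) = (N : ℤ) - (n : ℤ) by ring,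
      show ((N : ℤ) - (n : ℤ) - 1 - ((n : ℤ) + 1) + 1) = (N : ℤ) - 1 - 2 * (n : ℤ) by ring] at k
  linear_combination c * k

lemma conjE_same (p : ℕ) (b : ℂ) (hb : b ≠ 0) (z w : ℤ) (c : ℂ) (h : z = w + 2) :
    b * qc p ^ z * c * (b * qc p ^ w)⁻¹ = qc p ^ 2 * c := by
  have hq0 := qc_ne_zero p
  subst h
  rw [zpow_add₀ hq0, mul_inv, show ((2:ℤ)) = ((2:ℕ) : ℤ) by norm_num, zpow_natCast]
  have hw : qc p ^ w ≠ 0 := zpow_ne_zero _ hq0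
  field_simp

lemma conjE_cross1 (p : ℕ) (hp : 2 ≤ p) (a : ℂ) (ha : a ≠ 0) (z w : ℤ) (c : ℂ)
    (h : z + (p : ℤ) = w + 2) :
    -a * qc p ^ z * c * (a * qc p ^ w)⁻¹ = qc p ^ 2 * c := by
  have hq0 := qc_ne_zero p
  have hz : z = w + 2 - (p : ℤ) := by omega
  subst hz
  rw [zpow_sub₀ hq0, zpow_add₀ hq0, zpow_natCast, qc_pow_p p hp, mul_inv,
    show ((2:ℤ)) = ((2:ℕ) : ℤ) by norm_num, zpow_natCast]
  have hw : qc p ^ w ≠ 0 := zpow_ne_zero _ hq0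
  field_simp

lemma conjE_cross2 (p : ℕ) (hp : 2 ≤ p) (a : ℂ) (ha : a ≠ 0) (z w : ℤ) (c : ℂ)
    (h : z + (p : ℤ) = w + 2) :
    a * qc p ^ z * c * (-a * qc p ^ w)⁻¹ = qc p ^ 2 * c := by
  have hq0 := qc_ne_zero p
  have hz : z = w + 2 - (p : ℤ) := by omega
  subst hz
  rw [zpow_sub₀ hq0, zpow_add₀ hq0, zpow_natCast, qc_pow_p p hp, mul_inv,
    show ((2:ℤ)) = ((2:ℕ) : ℤ) by norm_num, zpow_natCast]
  have hw : qc p ^ w ≠ 0 := zpow_ne_zero _ hq0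
  field_simp

lemma conjF_same (p : ℕ) (hp : 2 ≤ p) (b : ℂ) (hb : b ≠ 0) (z w : ℤ) (c : ℂ) (h : z + 2 = w) :
    b * qc p ^ z * c * (b * qc p ^ w)⁻¹ = (qc p ^ 2)⁻¹ * c := by
  have hq0 := qc_ne_zero p
  have hw : w = z + 2 := by omega
  subst hw
  rw [zpow_add₀ hq0, mul_inv, mul_inv]
  have hz : qc p ^ z ≠ 0 := zpow_ne_zero _ hq0
  have h2 : (qc p : ℂ) ^ (2:ℕ) ≠ 0 := pow_ne_zero _ hq0
  rw [show ((2:ℤ)) = ((2:ℕ) : ℤ) by norm_num, zpow_natCast]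
  field_simp

lemma conjF_cross1 (p : ℕ) (hp : 2 ≤ p) (a : ℂ) (ha : a ≠ 0) (z w : ℤ) (c : ℂ)
    (h : z + 2 = w + (p : ℤ)) :
    -a * qc p ^ z * c * (a * qc p ^ w)⁻¹ = (qc p ^ 2)⁻¹ * c := by
  have hq0 := qc_ne_zero p
  have hz : z = w + (p : ℤ) - 2 := by omega
  subst hz
  rw [zpow_sub₀ hq0, zpow_add₀ hq0, zpow_natCast, qc_pow_p p hp]
  have hw : qc p ^ w ≠ 0 := zpow_ne_zero _ hq0
  have h2 : (qc p : ℂ) ^ (2:ℤ) ≠ 0 := zpow_ne_zero _ hq0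
  rw [show ((2:ℤ)) = ((2:ℕ) : ℤ) by norm_num, zpow_natCast] at h2 ⊢
  field_simp

lemma conjF_cross2 (p : ℕ) (hp : 2 ≤ p) (a : ℂ) (ha : a ≠ 0) (z w : ℤ) (c : ℂ)
    (h : z + 2 = w + (p : ℤ)) :
    a * qc p ^ z * c * (-a * qc p ^ w)⁻¹ = (qc p ^ 2)⁻¹ * c := by
  have hq0 := qc_ne_zero p
  have hz : z = w + (p : ℤ) - 2 := by omega
  subst hz
  rw [zpow_sub₀ hq0, zpow_add₀ hq0, zpow_natCast, qc_pow_p p hp]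
  have hw : qc p ^ w ≠ 0 := zpow_ne_zero _ hq0
  have h2 : (qc p : ℂ) ^ (2:ℤ) ≠ 0 := zpow_ne_zero _ hq0
  rw [show ((2:ℤ)) = ((2:ℕ) : ℤ) by norm_num, zpow_natCast] at h2 ⊢
  field_simp

lemma entry_pow (p : ℕ) (hp : 2 ≤ p) (c : ℂ) (hc : c = 1 ∨ c = -1) (z : ℤ) :
    (c * qc p ^ z) ^ (2 * p) = 1 := by
  have hq0 := qc_ne_zero p
  rw [mul_pow]
  have h1 : c ^ (2 * p) = 1 := by
    rw [pow_mul]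
    rcases hc with h | h <;> rw [h] <;> norm_num
  have h2 : (qc p ^ z) ^ (2 * p) = 1 := by
    rw [← zpow_natCast (qc p ^ z) (2 * p), ← zpow_mul, mul_comm z ((2 * p : ℕ) : ℤ),
      zpow_mul, zpow_natCast, qc_pow_2p p hp, one_zpow]
  rw [h1, h2, one_mul]

lemma pow_eq_zero_of_weight {ι : Type*} [Fintype ι] [DecidableEq ι] (M : Matrix ι ι ℂ)
    (w : ι → ℕ) (N : ℕ) (hw : ∀ i, w i < N) (hM : ∀ i j, M i j ≠ 0 → w i < w j) :
    M ^ N = 0 := by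
  have key : ∀ k : ℕ, ∀ i j, w j < w i + k → (M ^ k) i j = 0 := by
    intro k
    induction k with
    | zero =>
      intro i j h
      simp only [pow_zero, Matrix.one_apply]
      rw [if_neg]
      rintro rfl; omega
    | succ k ih =>
      intro i j h
      rw [pow_succ', Matrix.mul_apply]
      apply Finset.sum_eq_zero
      intro t _
      by_cases hMt : M i t = 0
      · rw [hMt, zero_mul]
      · rw [ih t j (by have := hM i t hMt; omega), mul_zero]
  ext i j
  rw [key N i j (by have := hw j; omega)]
  simp

open Matrix

def wE (p s : ℕ) : PIdx p s → ℕ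
  | Sum.inl (Sum.inl n) => n
  | Sum.inl (Sum.inr n) => p - s + n
  | Sum.inr (Sum.inl k) => k
  | Sum.inr (Sum.inr k) => s + k

def wF (p s : ℕ) : PIdx p s → ℕ
  | Sum.inl (Sum.inl n) => p - s + n
  | Sum.inl (Sum.inr n) => n
  | Sum.inr (Sum.inl k) => k
  | Sum.inr (Sum.inr k) => s + k

/-- for `1 ≤ s ≤ p−1` and `a = ±1`, the `2p`-dimensional module
`P^a_s` with the action given above is a well-defined `U_q(sl2)`-module: the
operators satisfy all the defining relations of `U_q(sl2)`. -/
theorem projective_module_well_defined (p s : ℕ) (hp : 2 ≤ p) (hs1 : 1 ≤ s)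
    (hsp : s ≤ p - 1) (a : ℂ) (ha : a = 1 ∨ a = -1) :
    PK p s a * PKinv p s a = 1 ∧
    PE p s a ^ p = 0 ∧
    PF p s ^ p = 0 ∧
    PK p s a ^ (2 * p) = 1 ∧
    PK p s a * PE p s a * PKinv p s a = (qc p ^ 2) • PE p s a ∧
    PK p s a * PF p s * PKinv p s a = ((qc p ^ 2)⁻¹) • PF p s ∧
    PE p s a * PF p s - PF p s * PE p s a =
      ((qc p - (qc p)⁻¹)⁻¹) • (PK p s a - PKinv p s a) := by

  have hEF : PE p s a ^ p = 0 ∧ PF p s ^ p = 0 := by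
    constructor
    · apply pow_eq_zero_of_weight (PE p s a) (wE p s) p
      · intro i
        rcases i with (n|n)|(n|n) <;> simp only [wE] <;> (have := n.isLt; omega)
      · intro i j h
        rcases i with (m|m)|(m|m) <;> rcases j with (n|n)|(n|n) <;>
          simp only [PE, Matrix.of_apply] at h <;>
          simp only [wE] <;>
          first
          | exact absurd rfl h
          | (have h1 := m.isLt
             have h2 := n.isLt
             split_ifs at h with hc
             · omega
             · exact absurd rfl h)
    · have hFt : (PF p s)ᵀ ^ p = 0 := by
        apply pow_eq_zero_of_weight ((PF p s)ᵀ) (wF p s) p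
        · intro i
          rcases i with (n|n)|(n|n) <;> simp only [wF] <;> (have := n.isLt; omega)
        · intro i j h
          rw [Matrix.transpose_apply] at h
          rcases i with (m|m)|(m|m) <;> rcases j with (n|n)|(n|n) <;>
            simp only [PF, Matrix.of_apply] at h <;>
            simp only [wF] <;>
            first
            | exact absurd rfl h
            | (have h1 := m.isLt
               have h2 := n.isLt
               split_ifs at h with hc
               · omega
               · exact absurd rfl h)
      calc PF p s ^ p = (((PF p s)ᵀ ^ p)ᵀ) := by
            rw [← Matrix.transpose_pow, Matrix.transpose_transpose]
        _ = 0 := by rw [hFt]; simp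
  have hKK : PK p s a * PKinv p s a = 1 ∧ PK p s a ^ (2 * p) = 1 := by
    have ha0 : a ≠ 0 := by rcases ha with h | h <;> rw [h] <;> norm_num
    have hq0 := qc_ne_zero p
    constructor
    · ext i j
      rcases eq_or_ne i j with rfl | hij
      · rw [PK, PKinv, Matrix.diagonal_mul_diagonal, Matrix.diagonal_apply_eq,
          Matrix.one_apply_eq]
        rcases i with (n|n)|(n|n)
        · exact mul_inv_cancel₀ (mul_ne_zero ha0 (zpow_ne_zero _ hq0))
        · exact mul_inv_cancel₀ (mul_ne_zero ha0 (zpow_ne_zero _ hq0))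
        · exact mul_inv_cancel₀ (mul_ne_zero (neg_ne_zero.mpr ha0) (zpow_ne_zero _ hq0))
        · exact mul_inv_cancel₀ (mul_ne_zero (neg_ne_zero.mpr ha0) (zpow_ne_zero _ hq0))
      · rw [PK, PKinv, Matrix.diagonal_mul_diagonal, Matrix.diagonal_apply_ne _ hij,
          Matrix.one_apply_ne hij]
    · rw [PK, Matrix.diagonal_pow]
      ext i j
      rcases eq_or_ne i j with rfl | hij
      · rw [Matrix.diagonal_apply_eq, Matrix.one_apply_eq, Pi.pow_apply]
        rcases i with (n|n)|(n|n)
        · exact entry_pow p hp a ha _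
        · exact entry_pow p hp a ha _
        · exact entry_pow p hp (-a) (by rcases ha with h|h <;> rw [h] <;> norm_num) _
        · exact entry_pow p hp (-a) (by rcases ha with h|h <;> rw [h] <;> norm_num) _
      · rw [Matrix.diagonal_apply_ne _ hij, Matrix.one_apply_ne hij]
  refine ⟨hKK.1, hEF.1, hEF.2, hKK.2, ?_, ?_, ?_⟩
  ·
    have ha0 : a ≠ 0 := by rcases ha with h | h <;> rw [h] <;> norm_num
    have hna0 : -a ≠ 0 := neg_ne_zero.mpr ha0
    ext i j
    rcases i with (m|m)|(m|m) <;> rcases j with (n|n)|(n|n) <;>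
      simp only [PK, PKinv, PE, Matrix.mul_diagonal, Matrix.diagonal_mul,
        Matrix.of_apply, Matrix.smul_apply, smul_eq_mul]
    -- aa
    · have h1 := m.isLt; have h2 := n.isLt
      split_ifs with h
      · exact conjE_same p a ha0 _ _ _ (by omega)
      · ring
    -- ab
    · have h1 := m.isLt; have h2 := n.isLt
      split_ifs with h
      · exact conjE_same p a ha0 _ _ _ (by omega)
      · ring
    ----- ax
    · ring
    -- ay
    · have h1 := m.isLt; have h2 := n.isLt
      split_ifs with h
      · exact conjE_cross2 p hp a ha0 _ _ _ (by omega)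
      · ring
    -- ba
    · ring
    -- bb
    · have h1 := m.isLt; have h2 := n.isLt
      split_ifs with h
      · exact conjE_same p a ha0 _ _ _ (by omega)
      · ring
    · ring
    · ring
    -- xa
    · ring
    -- xb
    · have h1 := m.isLt; have h2 := n.isLt
      split_ifs with h
      · exact conjE_cross1 p hp a ha0 _ _ _ (by omega)
      · ring
    -- xx
    · have h1 := m.isLt; have h2 := n.isLt
      split_ifs with h
      · exact conjE_same p (-a) hna0 _ _ _ (by omega)
      · ring
    · ring
    · ring
    · ring
    · ring
    -- yy
    · have h1 := m.isLt; have h2 := n.isLt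
      split_ifs with h
      · exact conjE_same p (-a) hna0 _ _ _ (by omega)
      · ring
  ·
    have ha0 : a ≠ 0 := by rcases ha with h | h <;> rw [h] <;> norm_num
    have hna0 : -a ≠ 0 := neg_ne_zero.mpr ha0
    ext i j
    rcases i with (m|m)|(m|m) <;> rcases j with (n|n)|(n|n) <;>
      simp only [PK, PKinv, PF, Matrix.mul_diagonal, Matrix.diagonal_mul,
        Matrix.of_apply, Matrix.smul_apply, smul_eq_mul]
    -- aa
    · have h1 := m.isLt; have h2 := n.isLt
      split_ifs with h
      · exact conjF_same p hp a ha0 _ _ _ (by omega)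
      · ring
    · ring
    -- ax
    · have h1 := m.isLt; have h2 := n.isLt
      split_ifs with h
      · exact conjF_cross2 p hp a ha0 _ _ _ (by omega)
      · ring
    · ring
    · ring
    -- bb
    · have h1 := m.isLt; have h2 := n.isLt
      split_ifs with h
      · exact conjF_same p hp a ha0 _ _ _ (by omega)
      · ring
    · ring
    · ring
    · ring
    · ring
    -- xx
    · have h1 := m.isLt; have h2 := n.isLt
      split_ifs with h
      · exact conjF_same p hp (-a) hna0 _ _ _ (by omega)
      · ring
    · ring
    · ring
    -- yb
    · have h1 := m.isLt; have h2 := n.isLt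
      split_ifs with h
      · exact conjF_cross1 p hp a ha0 _ _ _ (by omega)
      · ring
    · ring
    -- yy
    · have h1 := m.isLt; have h2 := n.isLt
      split_ifs with h
      · exact conjF_same p hp (-a) hna0 _ _ _ (by omega)
      · ring
  ·
    have ha0 : a ≠ 0 := by rcases ha with h | h <;> rw [h] <;> norm_num
    have hna : -a = 1 ∨ -a = -1 := by rcases ha with h | h <;> rw [h] <;> [right; left] <;> norm_num
    ext i j
    rcases i with (m|m)|(m|m) <;> rcases j with (n|n)|(n|n) <;>
      simp only [Matrix.sub_apply, Matrix.mul_apply, Matrix.smul_apply, smul_eq_mul,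
        Fintype.sum_sum_type, PE, PF, PK, PKinv, Matrix.of_apply, Matrix.diagonal_apply,
        mul_zero, zero_mul, Finset.sum_const_zero, add_zero, zero_add,
        sum_EF_diag, sum_FE_diag, sum_EF_ab, sum_FE_ab, sum_cross3, sum_cross10,
        sum_z4, sum_z5, sum_z11, sum_z12,
        Sum.inl.injEq, Sum.inr.injEq, reduceCtorEq, if_false]
    -- (a,a)
    · by_cases hmn : m = n
      · subst hmn
        rw [if_pos (rfl : (m : ℕ) = (m : ℕ)), if_pos (rfl : (m : ℕ) = (m : ℕ)),
          if_pos (rfl : m = m), if_pos (rfl : m = m)]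
        exact diag_id p hp a ha s m m.isLt
      · have hv : ¬((m : ℕ) = (n : ℕ)) := fun hc => hmn (Fin.ext hc)
        simp [hmn, hv]
    -- (a,b)
    · have h1 := m.isLt; have h2 := n.isLt
      by_cases hmn : (m : ℕ) = (n : ℕ)
      · by_cases hn0 : (n : ℕ) = 0
        · by_cases hs2 : (n : ℕ) + 1 < s
          · rw [if_pos ⟨hmn, hs2⟩, if_neg (by omega : ¬((m:ℕ) = s - 1 ∧ (n:ℕ) = s - 1 ∧ 0 < p - s)),
              if_neg (by omega : ¬((m:ℕ) = (n:ℕ) ∧ 1 ≤ (n:ℕ) ∧ (n:ℕ) ≤ s)),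
              if_pos (by omega : (m:ℕ) = 0 ∧ (n:ℕ) = 0 ∧ 0 < p - s)]
            norm_num
          · rw [if_neg (by omega : ¬((m:ℕ) = (n:ℕ) ∧ (n:ℕ) + 1 < s)),
              if_pos (by omega : (m:ℕ) = s - 1 ∧ (n:ℕ) = s - 1 ∧ 0 < p - s),
              if_neg (by omega : ¬((m:ℕ) = (n:ℕ) ∧ 1 ≤ (n:ℕ) ∧ (n:ℕ) ≤ s)),
              if_pos (by omega : (m:ℕ) = 0 ∧ (n:ℕ) = 0 ∧ 0 < p - s)]
            norm_num
        · by_cases hs2 : (n : ℕ) + 1 < s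
          · rw [if_pos ⟨hmn, hs2⟩, if_neg (by omega : ¬((m:ℕ) = s - 1 ∧ (n:ℕ) = s - 1 ∧ 0 < p - s)),
              if_pos (by omega : (m:ℕ) = (n:ℕ) ∧ 1 ≤ (n:ℕ) ∧ (n:ℕ) ≤ s),
              if_neg (by omega : ¬((m:ℕ) = 0 ∧ (n:ℕ) = 0 ∧ 0 < p - s))]
            norm_num
          · rw [if_neg (by omega : ¬((m:ℕ) = (n:ℕ) ∧ (n:ℕ) + 1 < s)),
              if_pos (by omega : (m:ℕ) = s - 1 ∧ (n:ℕ) = s - 1 ∧ 0 < p - s),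
              if_pos (by omega : (m:ℕ) = (n:ℕ) ∧ 1 ≤ (n:ℕ) ∧ (n:ℕ) ≤ s),
              if_neg (by omega : ¬((m:ℕ) = 0 ∧ (n:ℕ) = 0 ∧ 0 < p - s))]
            norm_num
      · rw [if_neg (by omega : ¬((m:ℕ) = (n:ℕ) ∧ (n:ℕ) + 1 < s)),
          if_neg (by omega : ¬((m:ℕ) = s - 1 ∧ (n:ℕ) = s - 1 ∧ 0 < p - s)),
          if_neg (by omega : ¬((m:ℕ) = (n:ℕ) ∧ 1 ≤ (n:ℕ) ∧ (n:ℕ) ≤ s)),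
          if_neg (by omega : ¬((m:ℕ) = 0 ∧ (n:ℕ) = 0 ∧ 0 < p - s))]
        norm_num
    -- (a,x)
    · norm_num
    -- (a,y)
    · have h1 := m.isLt
      rw [if_neg (by omega : ¬((n:ℕ) = 0 ∧ (m:ℕ) = s ∧ 0 < s))]
      norm_num
    -- (b,a)
    · norm_num
    -- (b,b)
    · by_cases hmn : m = n
      · subst hmn
        rw [if_pos (rfl : (m : ℕ) = (m : ℕ)), if_pos (rfl : (m : ℕ) = (m : ℕ)),
          if_pos (rfl : m = m), if_pos (rfl : m = m)]
        exact diag_id p hp a ha s m m.isLt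
      · have hv : ¬((m : ℕ) = (n : ℕ)) := fun hc => hmn (Fin.ext hc)
        simp [hmn, hv]
    -- (b,x)
    · norm_num
    -- (b,y)
    · norm_num
    -- (x,a)
    · norm_num
    -- (x,b)
    · have h1 := m.isLt
      rw [if_neg (by omega : ¬((n:ℕ) = 0 ∧ (m:ℕ) = p - s ∧ 0 < p - s))]
      norm_num
    -- (x,x)
    · by_cases hmn : m = n
      · subst hmn
        rw [if_pos (rfl : (m : ℕ) = (m : ℕ)), if_pos (rfl : (m : ℕ) = (m : ℕ)),
          if_pos (rfl : m = m), if_pos (rfl : m = m)]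
        exact diag_id p hp (-a) hna (p - s) m m.isLt
      · have hv : ¬((m : ℕ) = (n : ℕ)) := fun hc => hmn (Fin.ext hc)
        simp [hmn, hv]
    -- (x,y)
    · norm_num
    -- (y,a)
    · norm_num
    -- (y,b)
    · norm_num
    -- (y,x)
    · norm_num
    -- (y,y)
    · by_cases hmn : m = n
      · subst hmn
        rw [if_pos (rfl : (m : ℕ) = (m : ℕ)), if_pos (rfl : (m : ℕ) = (m : ℕ)),
          if_pos (rfl : m = m), if_pos (rfl : m = m)]
        exact diag_id p hp (-a) hna (p - s) m m.isLt
      · have hv : ¬((m : ℕ) = (n : ℕ)) := fun hc => hmn (Fin.ext hc)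
        simp [hmn, hv]
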